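/- Fix real numbers ξ, θ, θ⁻ with θ⁻ < θ, and 0 < σ_min < σ_max. With σᵢ = σ_min + ((i−1)/(N−1))·(σ_max − σ_min), Δσ = (σ_max − σ_min)/(N−1), Dᵢᴺ(θ, θ⁻) = (σ_min/σᵢ₊₁)ξ + (1 − σ_min/σᵢ₊₁)θ − (σ_min/σᵢ)ξ − (1 − σ_min/σᵢ)θ⁻, and Gᴺ(θ, θ⁻) = (2/(N−1))·Σ_{i=1}^{N−1} Dᵢᴺ(θ, θ⁻)·(1 − σ_min/σᵢ₊₁), the scaled gradient (1/Δσ)·Gᴺ(θ, θ⁻) tends to +∞ as N → ∞. -/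

import Mathlib

open Filter Finset

/-- The `i`-th noise level of the uniform discretization with `N` steps. -/
noncomputable def sigmaLvl (σmin σmax : ℝ) (N i : ℕ) : ℝ :=
  σmin + (((i : ℝ) - 1) / ((N : ℝ) - 1)) * (σmax - σmin)

/-- The difference `Dᵢᴺ(θ, θ⁻)` of student and teacher outputs in the toy model. -/
noncomputable def Dtoy (ξ θ θm σmin σmax : ℝ) (N i : ℕ) : ℝ :=
  (σmin / sigmaLvl σmin σmax N (i + 1)) * ξ + (1 - σmin / sigmaLvl σmin σmax N (i + 1)) * θ
    - (σmin / sigmaLvl σmin σmax N i) * ξ - (1 - σmin / sigmaLvl σmin σmax N i) * θm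

/-- The gradient `Gᴺ(θ, θ⁻)` of the toy consistency loss in `θ`. -/
noncomputable def Gtoy (ξ θ θm σmin σmax : ℝ) (N : ℕ) : ℝ :=
  (2 / ((N : ℝ) - 1)) * ∑ i ∈ Finset.Icc 1 (N - 1),
    Dtoy ξ θ θm σmin σmax N i * (1 - σmin / sigmaLvl σmin σmax N (i + 1))

lemma key_sum_bound (ξ θ θm σmin σmax : ℝ)
    (hlt : θm < θ) (h0 : 0 < σmin) (h1 : σmin < σmax) {N : ℕ} (hN : 2 ≤ N) :
    (θ - θm) * (((σmax - σmin)/2 / (σmin + (σmax - σmin)/2))^2 * (((N:ℝ) - 1)/2)) - |θm - ξ|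
      ≤ ∑ i ∈ Finset.Icc 1 (N - 1),
          Dtoy ξ θ θm σmin σmax N i * (1 - σmin / sigmaLvl σmin σmax N (i + 1)) := by
  have hΔ : 0 < σmax - σmin := by linarith
  have hd : 0 < θ - θm := by linarith
  have hM : 0 ≤ |θm - ξ| := abs_nonneg _
  have hm : (0:ℝ) < (N:ℝ) - 1 := by
    have : (2:ℝ) ≤ (N:ℝ) := by exact_mod_cast hN
    linarith
  set a : ℝ := (σmax - σmin)/2 / (σmin + (σmax - σmin)/2) with ha_def
  have hden : (0:ℝ) < σmin + (σmax - σmin)/2 := by linarith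
  have ha : 0 < a := div_pos (by linarith) hden
  have hs_ge : ∀ i : ℕ, 1 ≤ i → σmin ≤ sigmaLvl σmin σmax N i := by
    intro i hi
    have h1i : (1:ℝ) ≤ (i:ℝ) := by exact_mod_cast hi
    have : 0 ≤ ((i:ℝ) - 1) / ((N:ℝ) - 1) * (σmax - σmin) :=
      mul_nonneg (div_nonneg (by linarith) hm.le) hΔ.le
    simp only [sigmaLvl]; linarith
  have hs_pos : ∀ i : ℕ, 1 ≤ i → 0 < sigmaLvl σmin σmax N i := fun i hi =>
    lt_of_lt_of_le h0 (hs_ge i hi)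
  have hs_mono : ∀ i : ℕ, sigmaLvl σmin σmax N i ≤ sigmaLvl σmin σmax N (i + 1) := by
    intro i
    have hle : ((i:ℝ) - 1) / ((N:ℝ) - 1) ≤ (((i:ℝ) + 1) - 1) / ((N:ℝ) - 1) :=
      (div_le_div_iff_of_pos_right hm).mpr (by linarith)
    have := mul_le_mul_of_nonneg_right hle hΔ.le
    simp only [sigmaLvl]
    push_cast
    linarith
  set f : ℕ → ℝ := fun i => σmin / sigmaLvl σmin σmax N i with hf_def
  set B : ℕ → ℝ := fun i => 1 - σmin / sigmaLvl σmin σmax N (i + 1) with hB_def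
  set E : ℕ → ℝ := fun i => f i - f (i + 1) with hE_def
  have hB0 : ∀ i : ℕ, 1 ≤ i → 0 ≤ B i := by
    intro i hi
    have hp := hs_pos (i+1) (by omega)
    have hge := hs_ge (i+1) (by omega)
    have hle1 : σmin / sigmaLvl σmin σmax N (i+1) ≤ 1 := by
      rw [div_le_one hp]; linarith
    simp only [hB_def]; linarith
  have hB1 : ∀ i : ℕ, 1 ≤ i → B i ≤ 1 := by
    intro i hi
    have hp := hs_pos (i+1) (by omega)
    have hnn : 0 ≤ σmin / sigmaLvl σmin σmax N (i+1) := div_nonneg h0.le hp.le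
    simp only [hB_def]; linarith
  have hE0 : ∀ i : ℕ, 1 ≤ i → 0 ≤ E i := by
    intro i hi
    have hle2 : σmin / sigmaLvl σmin σmax N (i+1) ≤ σmin / sigmaLvl σmin σmax N i :=
      div_le_div_of_nonneg_left h0.le (hs_pos i hi) (hs_mono i)
    simp only [hE_def, hf_def]; linarith
  have term_ge : ∀ i ∈ Finset.Icc 1 (N - 1),
      (θ - θm) * (B i)^2 - |θm - ξ| * E i ≤ Dtoy ξ θ θm σmin σmax N i * B i := by
    intro i hi
    simp only [Finset.mem_Icc] at hi
    have hi1 : 1 ≤ i := hi.1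
    have hD : Dtoy ξ θ θm σmin σmax N i = B i * (θ - θm) + E i * (θm - ξ) := by
      simp only [Dtoy, hB_def, hE_def, hf_def]; ring
    rw [hD]
    have hb0 := hB0 i hi1
    have hb1 := hB1 i hi1
    have he0 := hE0 i hi1
    have h₁ : -|θm - ξ| ≤ θm - ξ := neg_abs_le _
    have key : - (|θm - ξ| * E i) ≤ E i * (θm - ξ) * B i := by
      nlinarith [mul_nonneg he0 hb0, mul_le_of_le_one_right he0 hb1]
    have hexp : (B i * (θ - θm) + E i * (θm - ξ)) * B i
        = (θ - θm) * (B i)^2 + E i * (θm - ξ) * B i := by ring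
    rw [hexp]
    linarith
  have hsum1 : ∑ i ∈ Finset.Icc 1 (N-1), ((θ - θm) * (B i)^2 - |θm - ξ| * E i)
      ≤ ∑ i ∈ Finset.Icc 1 (N-1), Dtoy ξ θ θm σmin σmax N i * B i :=
    Finset.sum_le_sum term_ge
  -- telescoping
  have htel : ∑ i ∈ Finset.Icc 1 (N-1), E i = f 1 - f N := by
    have hIcc : Finset.Icc 1 (N-1) = Finset.Ico 1 N := by
      ext x
      simp only [Finset.mem_Icc, Finset.mem_Ico]
      omega
    rw [hIcc, Finset.sum_Ico_eq_sum_range]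
    have h := Finset.sum_range_sub' (f := fun j => f (1 + j)) (n := N - 1)
    have hN' : 1 + (N - 1) = N := by omega
    rw [hN'] at h
    simp only [hE_def]
    exact h
  have hf1 : f 1 = 1 := by
    simp only [hf_def, sigmaLvl]
    norm_num
    exact ne_of_gt h0
  have hfN : f N = σmin / σmax := by
    simp only [hf_def, sigmaLvl]
    rw [div_self (ne_of_gt hm)]
    ring_nf
  have hEsum : ∑ i ∈ Finset.Icc 1 (N-1), E i ≤ 1 := by
    rw [htel, hf1, hfN]
    have : 0 ≤ σmin / σmax := div_nonneg h0.le (by linarith)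
    linarith
  -- lower bound on sum of B^2
  have hsubset : Finset.Icc ((N+1)/2) (N-1) ⊆ Finset.Icc 1 (N-1) :=
    Finset.Icc_subset_Icc (by omega) le_rfl
  have hBa : ∀ i ∈ Finset.Icc ((N+1)/2) (N-1), a ≤ B i := by
    intro i hi
    simp only [Finset.mem_Icc] at hi
    have h2i : N - 1 ≤ 2 * i := by omega
    have h2iR : ((N:ℝ) - 1) ≤ 2 * (i:ℝ) := by
      have hN1 : ((N - 1 : ℕ) : ℝ) = (N:ℝ) - 1 := by
        have h1N : 1 ≤ N := by omega
        push_cast [h1N]; ring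
      have : ((N - 1 : ℕ) : ℝ) ≤ ((2 * i : ℕ) : ℝ) := by exact_mod_cast h2i
      push_cast at this
      linarith [hN1 ▸ this]
    have hs : σmin + (σmax - σmin)/2 ≤ sigmaLvl σmin σmax N (i + 1) := by
      simp only [sigmaLvl]
      have h1 : (1:ℝ)/2 ≤ ((((i:ℕ)+1:ℕ):ℝ) - 1) / ((N:ℝ) - 1) := by
        push_cast
        rw [le_div_iff₀ hm]
        linarith
      nlinarith [h1]
    have hspos : 0 < sigmaLvl σmin σmax N (i + 1) := lt_of_lt_of_le hden hs
    have hdivle : σmin / sigmaLvl σmin σmax N (i + 1) ≤ σmin / (σmin + (σmax - σmin)/2) :=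
      div_le_div_of_nonneg_left h0.le hden hs
    have hcomp : 1 - σmin / (σmin + (σmax - σmin)/2) = a := by
      rw [ha_def]
      field_simp
      ring
    simp only [hB_def]
    linarith
  have hBsum : a^2 * (((N:ℝ) - 1)/2) ≤ ∑ i ∈ Finset.Icc 1 (N-1), (B i)^2 := by
    have hstep1 : ∑ i ∈ Finset.Icc ((N+1)/2) (N-1), (B i)^2
        ≤ ∑ i ∈ Finset.Icc 1 (N-1), (B i)^2 :=
      Finset.sum_le_sum_of_subset_of_nonneg hsubset (fun i _ _ => sq_nonneg _)
    have hstep2 : ∑ i ∈ Finset.Icc ((N+1)/2) (N-1), a^2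
        ≤ ∑ i ∈ Finset.Icc ((N+1)/2) (N-1), (B i)^2 := by
      apply Finset.sum_le_sum
      intro i hi
      have := hBa i hi
      nlinarith [ha]
    have hcard : ((N:ℝ) - 1)/2 ≤ ((Finset.Icc ((N+1)/2) (N-1)).card : ℝ) := by
      rw [Nat.card_Icc]
      have hcard2 : N - 1 ≤ 2 * (N - 1 + 1 - (N+1)/2) := by omega
      have hN1 : ((N - 1 : ℕ) : ℝ) = (N:ℝ) - 1 := by
        have h1N : 1 ≤ N := by omega
        push_cast [h1N]; ring
      have h2 : ((N - 1:ℕ):ℝ) ≤ ((2 * (N - 1 + 1 - (N+1)/2) : ℕ) : ℝ) := by exact_mod_cast hcard2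
      push_cast at h2
      rw [hN1] at h2
      linarith
    have hconst : ∑ _i ∈ Finset.Icc ((N+1)/2) (N-1), a^2
        = ((Finset.Icc ((N+1)/2) (N-1)).card : ℝ) * a^2 := by
      rw [Finset.sum_const, nsmul_eq_mul]
    nlinarith [sq_nonneg a, hstep1, hstep2, hcard]
  have hcombine : ∑ i ∈ Finset.Icc 1 (N-1), ((θ - θm) * (B i)^2 - |θm - ξ| * E i)
      = (θ - θm) * (∑ i ∈ Finset.Icc 1 (N-1), (B i)^2)
        - |θm - ξ| * (∑ i ∈ Finset.Icc 1 (N-1), E i) := by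
    rw [Finset.sum_sub_distrib, ← Finset.mul_sum, ← Finset.mul_sum]
  have h1' : (θ - θm) * (a^2 * (((N:ℝ) - 1)/2))
      ≤ (θ - θm) * ∑ i ∈ Finset.Icc 1 (N-1), (B i)^2 :=
    mul_le_mul_of_nonneg_left hBsum hd.le
  have h2' : |θm - ξ| * (∑ i ∈ Finset.Icc 1 (N-1), E i) ≤ |θm - ξ| :=
    le_trans (mul_le_mul_of_nonneg_left hEsum hM) (by linarith)
  calc (θ - θm) * (a^2 * (((N:ℝ) - 1)/2)) - |θm - ξ|
      ≤ (θ - θm) * (∑ i ∈ Finset.Icc 1 (N-1), (B i)^2)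
        - |θm - ξ| * (∑ i ∈ Finset.Icc 1 (N-1), E i) := by linarith
    _ = ∑ i ∈ Finset.Icc 1 (N-1), ((θ - θm) * (B i)^2 - |θm - ξ| * E i) := hcombine.symm
    _ ≤ ∑ i ∈ Finset.Icc 1 (N-1), Dtoy ξ θ θm σmin σmax N i * B i := hsum1
    _ = _ := by simp only [hB_def]

/-- Proposition 1, equation (7), case `θ⁻ < θ`: the gradient scaled by `1/Δσ`
tends to `+∞` as `N → ∞`. -/
theorem scaled_gradient_limit_teacher_lt_student (ξ θ θm σmin σmax : ℝ)
    (hlt : θm < θ) (h0 : 0 < σmin) (h1 : σmin < σmax) :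
    Tendsto (fun N : ℕ =>
        (1 / ((σmax - σmin) / ((N : ℝ) - 1))) * Gtoy ξ θ θm σmin σmax N) atTop atTop := by
  have hΔ : 0 < σmax - σmin := by linarith
  have hd : 0 < θ - θm := by linarith
  set a : ℝ := (σmax - σmin)/2 / (σmin + (σmax - σmin)/2) with ha_def
  have ha : 0 < a := div_pos (by linarith) (by linarith)
  set c₁ : ℝ := (θ - θm) * a^2 / (σmax - σmin) with hc₁_def
  have hc₁ : 0 < c₁ := div_pos (mul_pos hd (pow_pos ha 2)) hΔ
  set K : ℝ := -c₁ - 2 * |θm - ξ| / (σmax - σmin) with hK_def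
  have hlim : Tendsto (fun N : ℕ => c₁ * (N:ℝ) + K) atTop atTop :=
    tendsto_atTop_add_const_right _ K (tendsto_natCast_atTop_atTop.const_mul_atTop hc₁)
  apply tendsto_atTop_mono' atTop ?_ hlim
  filter_upwards [eventually_ge_atTop 2] with N hN
  have hm : (0:ℝ) < (N:ℝ) - 1 := by
    have : (2:ℝ) ≤ (N:ℝ) := by exact_mod_cast hN
    linarith
  have hkey := key_sum_bound ξ θ θm σmin σmax hlt h0 h1 hN
  have hG : (1 / ((σmax - σmin) / ((N : ℝ) - 1))) * Gtoy ξ θ θm σmin σmax N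
      = (2/(σmax - σmin)) * ∑ i ∈ Finset.Icc 1 (N - 1),
          Dtoy ξ θ θm σmin σmax N i * (1 - σmin / sigmaLvl σmin σmax N (i + 1)) := by
    simp only [Gtoy]
    field_simp
  rw [hG]
  have h2Δ : (0:ℝ) ≤ 2/(σmax - σmin) := by positivity
  have hmul := mul_le_mul_of_nonneg_left hkey h2Δ
  calc c₁ * (N:ℝ) + K
      = (2/(σmax - σmin)) * ((θ - θm) * (a^2 * (((N:ℝ) - 1)/2)) - |θm - ξ|) := by
        rw [hc₁_def, hK_def, hc₁_def]
        field_simp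
        ring
    _ ≤ _ := hmul
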